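/- arXiv:2204.01799 — 2 statements merged into one kernel-verified Lean document; each statement's English description precedes it below -/
import Mathlib

section
/- Suppose n is a natural number and f_n : [ω_n]^{n+1} → [ω_n]^{<ℵ_0} is a set mapping satisfying: (1) f_n(s) ⊆ max(s) for all s ∈ [ω_n]^{n+1}, and (2) for every u ∈ [ω_n]^{n+2} there is α ∈ u with α < max(u) and α ∈ f_n(u \ {α}). Then there exists a set mapping f_{n+1} : [ω_{n+1}]^{n+2} → [ω_{n+1}]^{<ℵ_0} satisfying: (1') f_{n+1}(s) ⊆ max(s) for all s ∈ [ω_{n+1}]^{n+2}, and (2') for every t ∈ [ω_{n+1}]^{n+3} there is α ∈ t with α < max(t) and α ∈ f_{n+1}(t \ {α}). -/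
/-- The inductive step of Kuratowski's theorem: from a set mapping on `[ωₙ]^{n+1}`
satisfying the free set conditions, one obtains such a mapping on `[ω_{n+1}]^{n+2}`. -/
theorem stmt5 (n : ℕ) (f : Finset Ordinal → Finset Ordinal)
    (h1 : ∀ (s : Finset Ordinal) (hs : s.Nonempty),
        (∀ α ∈ s, α < (Cardinal.aleph n).ord) → s.card = n + 1 →
          ∀ β ∈ f s, β < s.max' hs ∧ β < (Cardinal.aleph n).ord)
    (h2 : ∀ (u : Finset Ordinal) (hu : u.Nonempty),
        (∀ α ∈ u, α < (Cardinal.aleph n).ord) → u.card = n + 2 →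
          ∃ α ∈ u, α < u.max' hu ∧ α ∈ f (u.erase α)) :
    ∃ g : Finset Ordinal → Finset Ordinal,
      (∀ (s : Finset Ordinal) (hs : s.Nonempty),
          (∀ α ∈ s, α < (Cardinal.aleph (n + 1)).ord) → s.card = n + 2 →
            ∀ β ∈ g s, β < s.max' hs ∧ β < (Cardinal.aleph (n + 1)).ord) ∧
      (∀ (t : Finset Ordinal) (ht : t.Nonempty),
          (∀ α ∈ t, α < (Cardinal.aleph (n + 1)).ord) → t.card = n + 3 →
            ∃ α ∈ t, α < t.max' ht ∧ α ∈ g (t.erase α)) := by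
  classical
  -- The statement has two universe variables: `f` lives over `Ordinal.{u_1}`, the goal
  -- over `Ordinal.{u_2}`.  We first transfer `f` to universe `u_2`.
  set A1 : Ordinal.{u_1} := (Cardinal.aleph (n : Ordinal.{u_1})).ord with hA1
  set B1 : Ordinal.{u_1} := (Cardinal.aleph ((n : Ordinal.{u_1}) + 1)).ord with hB1
  set A2 : Ordinal.{u_2} := (Cardinal.aleph (n : Ordinal.{u_2})).ord with hA2
  set B2 : Ordinal.{u_2} := (Cardinal.aleph ((n : Ordinal.{u_2}) + 1)).ord with hB2
  have hbB : Ordinal.lift.{u_1} B2 = Ordinal.lift.{u_2} B1 := by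
    rw [hB1, hB2]
    simp [Cardinal.lift_ord, Cardinal.lift_aleph]
  have hbA : Ordinal.lift.{u_1} A2 = Ordinal.lift.{u_2} A1 := by
    rw [hA1, hA2]
    simp [Cardinal.lift_ord, Cardinal.lift_aleph]
  have hAB2 : A2 ≤ B2 := by
    rw [hA2, hB2]
    exact Cardinal.ord_le_ord.mpr (Cardinal.aleph_le_aleph.mpr
      (le_of_lt (by rw [Ordinal.add_one_eq_succ]; exact Order.lt_succ _)))
  have hAB1 : A1 ≤ B1 := by
    rw [hA1, hB1]
    exact Cardinal.ord_le_ord.mpr (Cardinal.aleph_le_aleph.mpr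
      (le_of_lt (by rw [Ordinal.add_one_eq_succ]; exact Order.lt_succ _)))
  -- downward transfer maps
  have exφ : ∀ β : Ordinal.{u_2}, ∃ β' : Ordinal.{u_1},
      β < B2 → Ordinal.lift.{u_1} β = Ordinal.lift.{u_2} β' := by
    intro β
    by_cases h : β < B2
    · have hle : Ordinal.lift.{u_1} β ≤ Ordinal.lift.{u_2} B1 := by
        rw [← hbB]; exact Ordinal.lift_le.mpr h.le
      obtain ⟨β', hβ'⟩ := Ordinal.mem_range_lift_of_le hle
      exact ⟨β', fun _ => hβ'.symm⟩
    · exact ⟨0, fun h' => absurd h' h⟩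
  choose φ hφ using exφ
  have exψ : ∀ β' : Ordinal.{u_1}, ∃ β : Ordinal.{u_2},
      β' < B1 → Ordinal.lift.{u_2} β' = Ordinal.lift.{u_1} β := by
    intro β'
    by_cases h : β' < B1
    · have hle : Ordinal.lift.{u_2} β' ≤ Ordinal.lift.{u_1} B2 := by
        rw [hbB]; exact Ordinal.lift_le.mpr h.le
      obtain ⟨β, hβ⟩ := Ordinal.mem_range_lift_of_le hle
      exact ⟨β, fun _ => hβ.symm⟩
    · exact ⟨0, fun h' => absurd h' h⟩
  choose ψ hψ using exψ
  -- basic facts about the transfer maps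
  have hφB1 : ∀ β, β < B2 → φ β < B1 := by
    intro β hβ
    rw [← Ordinal.lift_lt.{u_2, u_1}, ← hφ β hβ, ← hbB]
    exact Ordinal.lift_lt.mpr hβ
  have hφA : ∀ β, β < A2 → φ β < A1 := by
    intro β hβ
    rw [← Ordinal.lift_lt.{u_2, u_1}, ← hφ β (hβ.trans_le hAB2), ← hbA]
    exact Ordinal.lift_lt.mpr hβ
  have hφlt : ∀ β, β < B2 → ∀ γ, γ < B2 → (φ β < φ γ ↔ β < γ) := by
    intro β hβ γ hγ
    rw [← Ordinal.lift_lt.{u_2, u_1} (a := φ β), ← hφ β hβ, ← hφ γ hγ, Ordinal.lift_lt]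
  have hφle : ∀ β, β < B2 → ∀ γ, γ < B2 → (φ β ≤ φ γ ↔ β ≤ γ) := by
    intro β hβ γ hγ
    rw [← Ordinal.lift_le.{u_2, u_1} (a := φ β), ← hφ β hβ, ← hφ γ hγ, Ordinal.lift_le]
  have hφinj : ∀ β, β < B2 → ∀ γ, γ < B2 → φ β = φ γ → β = γ := by
    intro β hβ γ hγ h
    have := congrArg (Ordinal.lift.{u_2}) h
    rw [← hφ β hβ, ← hφ γ hγ] at this
    exact Ordinal.lift_inj.mp this
  have hψφ : ∀ β, β < B2 → ψ (φ β) = β := by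
    intro β hβ
    have h1' := hψ (φ β) (hφB1 β hβ)
    rw [← hφ β hβ] at h1'
    exact Ordinal.lift_inj.mp h1'.symm
  have hψA : ∀ β', β' < A1 → ψ β' < A2 := by
    intro β' hβ'
    rw [← Ordinal.lift_lt.{u_1, u_2}, ← hψ β' (hβ'.trans_le hAB1), hbA]
    exact Ordinal.lift_lt.mpr hβ'
  have hψlt : ∀ β', β' < B1 → ∀ γ, γ < B2 → β' < φ γ → ψ β' < γ := by
    intro β' hβ' γ hγ h
    rw [← Ordinal.lift_lt.{u_1, u_2}, ← hψ β' hβ']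
    calc Ordinal.lift.{u_2} β' < Ordinal.lift.{u_2} (φ γ) := Ordinal.lift_le.mpr rfl.le |>.trans_lt (Ordinal.lift_lt.mpr h)
    _ = Ordinal.lift.{u_1} γ := (hφ γ hγ).symm
  -- the transferred set mapping
  set f₂ : Finset Ordinal.{u_2} → Finset Ordinal.{u_2} :=
    fun s => (f (s.image φ)).image ψ with hf₂
  -- transferred hypothesis h2
  have h2₂ : ∀ (u : Finset Ordinal.{u_2}) (hu : u.Nonempty),
      (∀ α ∈ u, α < A2) → u.card = n + 2 →
        ∃ α ∈ u, α < u.max' hu ∧ α ∈ f₂ (u.erase α) := by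
    intro u hu hlt hcard
    have huB : ∀ α ∈ u, α < B2 := fun α hα => (hlt α hα).trans_le hAB2
    set u' := u.image φ with hu'
    have hinj : Set.InjOn φ ↑u := fun x hx y hy hxy =>
      hφinj x (huB x hx) y (huB y hy) hxy
    have hu'lt : ∀ α' ∈ u', α' < A1 := by
      rintro _ hm
      obtain ⟨α, hα, rfl⟩ := Finset.mem_image.mp hm
      exact hφA α (hlt α hα)
    have hu'card : u'.card = n + 2 := by
      rw [hu', Finset.card_image_of_injOn hinj, hcard]
    have hu'ne : u'.Nonempty := hu.image φ
    have hmax : u'.max' hu'ne = φ (u.max' hu) := by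
      apply le_antisymm
      · apply Finset.max'_le
        rintro _ hm
        obtain ⟨α, hα, rfl⟩ := Finset.mem_image.mp hm
        exact (hφle α (huB α hα) _ (huB _ (u.max'_mem hu))).mpr (u.le_max' α hα)
      · exact Finset.le_max' _ _ (Finset.mem_image_of_mem φ (u.max'_mem hu))
    obtain ⟨γ', hγ'm, hγ'max, hγ'f⟩ := h2 u' hu'ne hu'lt hu'card
    obtain ⟨α, hαu, rfl⟩ := Finset.mem_image.mp hγ'm
    have hαB : α < B2 := huB α hαu
    refine ⟨α, hαu, ?_, ?_⟩
    · rw [hmax] at hγ'max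
      exact (hφlt α hαB _ (huB _ (u.max'_mem hu))).mp hγ'max
    · have herase : (u.erase α).image φ = u'.erase (φ α) := by
        rw [hu']
        ext c
        simp only [Finset.mem_image, Finset.mem_erase]
        constructor
        · rintro ⟨β, hβ, rfl⟩
          exact ⟨fun hEq => hβ.1 (hφinj β (huB β hβ.2) α hαB hEq), β, hβ.2, rfl⟩
        · rintro ⟨hne, β, hβ, rfl⟩
          exact ⟨β, ⟨fun hEq => hne (by rw [hEq]), hβ⟩, rfl⟩
      rw [hf₂]
      simp only
      rw [herase]
      have hmem := Finset.mem_image_of_mem ψ hγ'f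
      rw [hψφ α hαB] at hmem
      exact hmem
  clear h1 h2 hφ hψ hφB1 hφA hφle hψφ hψA hψlt hbA hbB hAB1 hAB2 hA1 hB1
  -- Now the actual construction, entirely in universe u_2.
  have key : ∀ δ : Ordinal.{u_2}, ∃ e : Ordinal.{u_2} → Ordinal.{u_2},
      δ < B2 → Set.InjOn e (Set.Iio δ) ∧ ∀ β < δ, e β < A2 := by
    intro δ
    by_cases hδ : δ < B2
    · have h1' : δ.card ≤ Cardinal.aleph (n : Ordinal.{u_2}) := by
        rw [hB2] at hδ
        have h1 := Cardinal.lt_ord.mp hδ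
        rw [Ordinal.add_one_eq_succ, Cardinal.aleph_succ] at h1
        exact Order.lt_succ_iff.mp h1
      have hle : Cardinal.mk (Set.Iio δ) ≤ Cardinal.mk (Set.Iio A2) := by
        rw [hA2, Ordinal.mk_Iio_ordinal, Ordinal.mk_Iio_ordinal, Cardinal.lift_le,
          Cardinal.card_ord]
        exact h1'
      obtain ⟨E⟩ := (Cardinal.le_def _ _).mp hle
      refine ⟨fun β => if h : β < δ then (E ⟨β, h⟩ : Ordinal) else 0,
        fun _ => ⟨?_, ?_⟩⟩
      · intro x hx y hy hxy
        simp only [Set.mem_Iio] at hx hy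
        simp only [dif_pos hx, dif_pos hy] at hxy
        exact congrArg Subtype.val (E.injective (Subtype.ext hxy))
      · intro β hβ
        simp only [dif_pos hβ]
        exact (E ⟨β, hβ⟩).2
    · exact ⟨fun _ => 0, fun h => absurd h hδ⟩
  choose e he using key
  -- the set defining g is finite
  have finA : ∀ (s : Finset Ordinal.{u_2}) (hs : s.Nonempty), s.max' hs < B2 →
      {β : Ordinal.{u_2} | β < s.max' hs ∧
        e (s.max' hs) β ∈ f₂ ((s.erase (s.max' hs)).image (e (s.max' hs)))}.Finite := by
    intro s hs hlt
    set δ := s.max' hs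
    apply Set.Finite.of_finite_image (f := e δ)
    · exact (f₂ ((s.erase δ).image (e δ))).finite_toSet.subset (by
        rintro x ⟨β, hβ, rfl⟩; exact hβ.2)
    · exact ((he δ hlt).1).mono (fun β hβ => hβ.1)
  refine ⟨fun s => if h : ∃ hs : s.Nonempty, s.max' hs < B2
      then (finA s h.choose h.choose_spec).toFinset else ∅, ?_, ?_⟩
  · -- condition 1
    intro s hs hlt _ β hβ
    have hδs : s.max' hs ∈ s := s.max'_mem hs
    have hδb : s.max' hs < B2 := hlt _ hδs
    have hcond : ∃ hs : s.Nonempty, s.max' hs < B2 := ⟨hs, hδb⟩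
    simp only [dif_pos hcond, Set.Finite.mem_toFinset, Set.mem_setOf_eq] at hβ
    exact ⟨hβ.1, hβ.1.trans hδb⟩
  · -- condition 2
    intro t ht hlt hcard
    set δ := t.max' ht with hδ
    have hδt : δ ∈ t := t.max'_mem ht
    have hδb : δ < B2 := hlt δ hδt
    set u := t.erase δ with hu
    have hucard : u.card = n + 2 := by
      rw [hu, Finset.card_erase_of_mem hδt, hcard]; omega
    have hult : ∀ β ∈ u, β < δ := fun β hβ =>
      lt_of_le_of_ne (t.le_max' β (Finset.mem_of_mem_erase hβ)) (Finset.ne_of_mem_erase hβ)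
    have hinj : Set.InjOn (e δ) (Set.Iio δ) := (he δ hδb).1
    have hinju : Set.InjOn (e δ) ↑u := hinj.mono (fun β hβ => hult β hβ)
    set v := u.image (e δ) with hv
    have hvcard : v.card = n + 2 := by
      rw [hv, Finset.card_image_of_injOn hinju, hucard]
    have hvne : v.Nonempty := Finset.card_pos.mp (by omega)
    have hvlt : ∀ γ ∈ v, γ < A2 := by
      intro γ hγ
      obtain ⟨β, hβ, rfl⟩ := Finset.mem_image.mp hγ
      exact (he δ hδb).2 β (hult β hβ)
    obtain ⟨γ, hγv, -, hγf⟩ := h2₂ v hvne hvlt hvcard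
    obtain ⟨α, hαu, rfl⟩ := Finset.mem_image.mp hγv
    have hαδ : α < δ := hult α hαu
    have hαt : α ∈ t := Finset.mem_of_mem_erase hαu
    refine ⟨α, hαt, hαδ, ?_⟩
    set s := t.erase α with hs
    have hδs : δ ∈ s := Finset.mem_erase.mpr ⟨hαδ.ne', hδt⟩
    have hsne : s.Nonempty := ⟨δ, hδs⟩
    have hmax : s.max' hsne = δ := by
      apply le_antisymm
      · exact Finset.max'_le _ _ _ (fun x hx => t.le_max' x (Finset.mem_of_mem_erase hx))
      · exact Finset.le_max' _ _ hδs
    have hcond : ∃ h : s.Nonempty, s.max' h < B2 := ⟨hsne, by rw [hmax]; exact hδb⟩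
    simp only [dif_pos hcond, Set.Finite.mem_toFinset, Set.mem_setOf_eq]
    have hmax' : s.max' hcond.choose = δ := hmax
    rw [hmax']
    refine ⟨hαδ, ?_⟩
    have himg : (s.erase δ).image (e δ) = v.erase (e δ α) := by
      rw [hs, Finset.erase_right_comm, ← hu]
      ext c
      simp only [Finset.mem_image, Finset.mem_erase, hv]
      constructor
      · rintro ⟨β, ⟨hβα, hβu⟩, rfl⟩
        exact ⟨fun hEq => hβα (hinju hβu hαu hEq), β, hβu, rfl⟩
      · rintro ⟨hne, β, hβu, rfl⟩
        exact ⟨β, ⟨fun hEq => hne (by rw [hEq]), hβu⟩, rfl⟩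
    rw [himg]
    exact hγf
end

section
/- Let (X, T) be a topological space and δ an ordinal, and suppose ⟨x_α : α < δ⟩ is a one-to-one enumeration of all the points of X. Let P be a family of countable subsets of δ (P ⊆ [δ]^{<ℵ_1}) such that: (1) P is hereditary, i.e. for every A ∈ P and every B ⊆ A, B ∈ P; and (2) there exists A ∈ P such that the subspace {x_α : α ∈ A} of X is homeomorphic to ℚ. Then the minimum of the set of order types {otp(A) : A ∈ P and the subspace {x_α : α ∈ A} is homeomorphic to ℚ} equals ω. -/
open Topology

lemma aux_homeo_rat (p q : ℚ) (S : Set ℚ) (hne : S.Nonempty) (hsub : S ⊆ Set.Ioo p q)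
    (hdense : ∀ a b : ℚ, p ≤ a → a < b → b ≤ q → ∃ s ∈ S, s ∈ Set.Ioo a b) :
    Nonempty (↥S ≃ₜ ℚ) := by
  have hlt : ∀ s ∈ S, p < s ∧ s < q := fun s hs => ⟨(hsub hs).1, (hsub hs).2⟩
  have left : ∀ (s : ℚ), s ∈ S → ∀ x : ℚ, x < s → ∃ b ∈ S, b < s ∧ x ≤ b := by
    intro s hs x hx
    obtain ⟨b, hbS, hb⟩ := hdense (max p x) s (le_max_left _ _)
      (max_lt (hlt s hs).1 hx) (hlt s hs).2.le
    exact ⟨b, hbS, hb.2, (le_max_right p x).trans hb.1.le⟩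
  have right : ∀ (s : ℚ), s ∈ S → ∀ x : ℚ, s < x → ∃ b ∈ S, s < b ∧ b ≤ x := by
    intro s hs x hx
    obtain ⟨b, hbS, hb⟩ := hdense s (min q x) (hlt s hs).1.le
      (lt_min (hlt s hs).2 hx) (min_le_left _ _)
    exact ⟨b, hbS, hb.1, hb.2.le.trans (min_le_right q x)⟩
  have hot : OrderTopology ↥S := by
    refine induced_orderTopology' (Subtype.val : ↥S → ℚ) Iff.rfl ?_ ?_
    · rintro ⟨a, ha⟩ x hx
      obtain ⟨b, hbS, hb1, hb2⟩ := left a ha x hx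
      exact ⟨⟨b, hbS⟩, hb1, hb2⟩
    · rintro ⟨a, ha⟩ x hx
      obtain ⟨b, hbS, hb1, hb2⟩ := right a ha x hx
      exact ⟨⟨b, hbS⟩, hb1, hb2⟩
  have hdo : DenselyOrdered ↥S := by
    constructor
    rintro ⟨a, ha⟩ ⟨b, hb⟩ hab
    obtain ⟨s, hsS, hs⟩ := hdense a b (hlt a ha).1.le hab (hlt b hb).2.le
    exact ⟨⟨s, hsS⟩, hs.1, hs.2⟩
  have hmin : NoMinOrder ↥S := by
    constructor
    rintro ⟨a, ha⟩
    obtain ⟨s, hsS, hs⟩ := hdense p a le_rfl (hlt a ha).1 (hlt a ha).2.le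
    exact ⟨⟨s, hsS⟩, hs.2⟩
  have hmax : NoMaxOrder ↥S := by
    constructor
    rintro ⟨a, ha⟩
    obtain ⟨s, hsS, hs⟩ := hdense a q (hlt a ha).1.le (hlt a ha).2 le_rfl
    exact ⟨⟨s, hsS⟩, hs.1⟩
  have hnem : Nonempty ↥S := hne.to_subtype
  obtain ⟨f⟩ := Order.iso_of_countable_dense ↥S ℚ
  exact ⟨f.toHomeomorph⟩

/-- When looking for copies of `ℚ` inside a well-ordered topological space on which a
hereditary family concentrates, one can always find one of order type `ω`: the minimal
order type of a member of a hereditary family `P` of countable sets of indices whose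
corresponding subspace is homeomorphic to `ℚ` equals `ω`. -/
theorem stmt6 (X : Type*) [TopologicalSpace X] (δ : Ordinal.{0}) (x : Ordinal → X)
    (hinj : ∀ α < δ, ∀ β < δ, x α = x β → α = β)
    (hsurj : ∀ p : X, ∃ α < δ, x α = p)
    (P : Set (Set Ordinal))
    (hP : ∀ A ∈ P, A.Countable ∧ A ⊆ Set.Iio δ)
    (hher : ∀ A ∈ P, ∀ B ⊆ A, B ∈ P)
    (hex : ∃ A ∈ P, Nonempty (↥(x '' A) ≃ₜ ℚ)) :
    sInf {o : Ordinal | ∃ A ∈ P, Nonempty (↥(x '' A) ≃ₜ ℚ) ∧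
        Ordinal.type (Subrel ((· < ·) : Ordinal → Ordinal → Prop) (· ∈ A)) = o}
      = Ordinal.omega0 := by
  classical
  obtain ⟨A, hA, ⟨e⟩⟩ := hex
  -- index function from ℚ back to ordinals
  have hxy : ∀ q : ℚ, ∃ α, α ∈ A ∧ x α = ((e.symm q : ↥(x '' A)) : X) := fun q => (e.symm q).2
  set h : ℚ → Ordinal := fun q => (hxy q).choose with hhdef
  have hhA : ∀ q, h q ∈ A := fun q => (hxy q).choose_spec.1
  have hhx : ∀ q, x (h q) = ((e.symm q : ↥(x '' A)) : X) := fun q => (hxy q).choose_spec.2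
  have hinj' : Function.Injective h := by
    intro a b hab
    have h1 : ((e.symm a : ↥(x '' A)) : X) = ((e.symm b : ↥(x '' A)) : X) := by
      rw [← hhx, ← hhx, hab]
    exact e.symm.injective (Subtype.ext h1)
  have hδ : ∀ q, h q < δ := fun q => (hP A hA).2 (hhA q)
  -- the sup of indices over rational intervals
  set σ : ℚ → ℚ → Ordinal := fun a b => sSup (h '' Set.Ioo a b) with hσdef
  have hbdd : ∀ a b : ℚ, BddAbove (h '' Set.Ioo a b) := by
    intro a b
    exact ⟨δ, by rintro _ ⟨r, _, rfl⟩; exact (hδ r).le⟩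
  have hmemle : ∀ (a b r : ℚ), r ∈ Set.Ioo a b → h r ≤ σ a b :=
    fun a b r hr => le_csSup (hbdd a b) ⟨r, hr, rfl⟩
  have hmono : ∀ a b c d : ℚ, c ≤ a → a < b → b ≤ d → σ a b ≤ σ c d := by
    intro a b c d hca hab hbd
    refine csSup_le_csSup (hbdd c d) (((Set.nonempty_Ioo).2 hab).image h) ?_
    exact Set.image_mono (Set.Ioo_subset_Ioo hca hbd)
  set W : Set Ordinal := {o | ∃ a b : ℚ, a < b ∧ σ a b = o} with hWdef
  have hWne : W.Nonempty := ⟨σ 0 1, 0, 1, by norm_num, rfl⟩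
  set m : Ordinal := sInf W with hmdef
  have hmW : m ∈ W := csInf_mem hWne
  obtain ⟨p0, q0, hp0q0, hσ0⟩ := hmW
  have hminW : ∀ a b : ℚ, a < b → m ≤ σ a b := fun a b hab => csInf_le' ⟨a, b, hab, rfl⟩
  -- refine the interval so that the sup is never attained
  obtain ⟨p1, q1, hp1, hq1, hp1q1, hnoatt⟩ :
      ∃ p1 q1 : ℚ, p0 ≤ p1 ∧ q1 ≤ q0 ∧ p1 < q1 ∧ ∀ r ∈ Set.Ioo p1 q1, h r ≠ m := by
    by_cases hat : ∃ z ∈ Set.Ioo p0 q0, h z = m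
    · obtain ⟨z, hz, hzm⟩ := hat
      refine ⟨z, q0, hz.1.le, le_rfl, hz.2, ?_⟩
      intro r hr hrm
      exact absurd (hinj' (hrm.trans hzm.symm)) (ne_of_gt hr.1)
    · exact ⟨p0, q0, le_rfl, le_rfl, hp0q0, fun r hr hrm => hat ⟨r, hr, hrm⟩⟩
  have hσeq : ∀ a b : ℚ, p1 ≤ a → a < b → b ≤ q1 → σ a b = m := by
    intro a b ha hab hb
    refine le_antisymm ?_ (hminW a b hab)
    rw [← hσ0]
    exact hmono a b p0 q0 (hp1.trans ha) hab (hb.trans hq1)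
  have hsubI : ∀ (a b : ℚ), p1 ≤ a → b ≤ q1 → Set.Ioo a b ⊆ Set.Ioo p1 q1 :=
    fun a b ha hb => Set.Ioo_subset_Ioo ha hb
  have hltm : ∀ r ∈ Set.Ioo p1 q1, h r < m := by
    intro r hr
    refine lt_of_le_of_ne ?_ (hnoatt r hr)
    calc h r ≤ σ p1 q1 := hmemle _ _ r hr
    _ = m := hσeq p1 q1 le_rfl hp1q1 le_rfl
  have key : ∀ a b : ℚ, p1 ≤ a → a < b → b ≤ q1 → ∀ β, β < m →
      ∃ r, r ∈ Set.Ioo a b ∧ β < h r ∧ h r < m := by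
    intro a b ha hab hb β hβ
    by_contra hcon
    push_neg at hcon
    have hle : σ a b ≤ β := by
      refine csSup_le (((Set.nonempty_Ioo).2 hab).image h) ?_
      rintro _ ⟨r, hr, rfl⟩
      by_contra hgt
      push_neg at hgt
      exact absurd (hltm r (hsubI a b ha hb hr)) (not_lt.2 (hcon r hr hgt))
    rw [hσeq a b ha hab hb] at hle
    exact absurd hβ (not_lt.2 hle)
  -- a surjection onto the rational subintervals of (p1, q1)
  have hQne : Nonempty {ab : ℚ × ℚ // p1 ≤ ab.1 ∧ ab.1 < ab.2 ∧ ab.2 ≤ q1} :=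
    ⟨⟨(p1, q1), le_rfl, hp1q1, le_rfl⟩⟩
  obtain ⟨u, hu⟩ := exists_surjective_nat {ab : ℚ × ℚ // p1 ≤ ab.1 ∧ ab.1 < ab.2 ∧ ab.2 ≤ q1}
  have hsubn : ∀ n (r : ℚ), r ∈ Set.Ioo (u n).1.1 (u n).1.2 → r ∈ Set.Ioo p1 q1 :=
    fun n r hr => hsubI _ _ (u n).2.1 (u n).2.2.2 hr
  have step : ∀ (n : ℕ) (β : Ordinal), β < m →
      ∃ r, r ∈ Set.Ioo (u n).1.1 (u n).1.2 ∧ β < h r ∧ h r < m :=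
    fun n β hβ => key _ _ (u n).2.1 (u n).2.2.1 (u n).2.2.2 β hβ
  have base : ∃ r, r ∈ Set.Ioo (u 0).1.1 (u 0).1.2 ∧ h r < m := by
    obtain ⟨r, hr⟩ := exists_between (u 0).2.2.1
    exact ⟨r, hr, hltm r (hsubn 0 r hr)⟩
  -- the recursive sequence
  let T : ℕ → Type := fun n => {r : ℚ // r ∈ Set.Ioo (u n).1.1 (u n).1.2 ∧ h r < m}
  let g : ∀ n, T n := fun n => Nat.rec (motive := T)
    ⟨base.choose, base.choose_spec⟩
    (fun k ih => ⟨(step (k+1) (h ih.1) ih.2.2).choose,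
      (step (k+1) (h ih.1) ih.2.2).choose_spec.1,
      (step (k+1) (h ih.1) ih.2.2).choose_spec.2.2⟩) n
  have ggt : ∀ n, h (g n).1 < h (g (n+1)).1 := fun n =>
    (step (n+1) (h (g n).1) (g n).2.2).choose_spec.2.1
  have hφ : StrictMono (fun n => h (g n).1) := strictMono_nat_of_lt_succ ggt
  set S : Set ℚ := Set.range (fun n => ((g n).1 : ℚ)) with hSdef
  have hSsub : S ⊆ Set.Ioo p1 q1 := by
    rintro _ ⟨n, rfl⟩
    exact hsubn n _ (g n).2.1
  have hSne : S.Nonempty := ⟨(g 0).1, 0, rfl⟩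
  have hSdense : ∀ a b : ℚ, p1 ≤ a → a < b → b ≤ q1 → ∃ s ∈ S, s ∈ Set.Ioo a b := by
    intro a b ha hab hb
    obtain ⟨n, hn⟩ := hu ⟨(a, b), ha, hab, hb⟩
    refine ⟨(g n).1, ⟨n, rfl⟩, ?_, ?_⟩
    · have hval1 : ((u n : ℚ × ℚ)).1 = a := by rw [hn]
      rw [← hval1]
      exact (g n).2.1.1
    · have hval2 : ((u n : ℚ × ℚ)).2 = b := by rw [hn]
      rw [← hval2]
      exact (g n).2.1.2
  obtain ⟨eS⟩ := aux_homeo_rat p1 q1 S hSne hSsub hSdense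
  set B : Set Ordinal := h '' S with hBdef
  have hBA : B ⊆ A := by rintro _ ⟨s, _, rfl⟩; exact hhA s
  have hBP : B ∈ P := hher A hA B hBA
  -- the subspace on B is homeomorphic to ℚ
  have hBim : x '' B = Set.range (fun s : ↥S => ((e.symm (s : ℚ) : ↥(x '' A)) : X)) := by
    ext y
    constructor
    · rintro ⟨_, ⟨s, hs, rfl⟩, rfl⟩
      exact ⟨⟨s, hs⟩, (hhx s).symm⟩
    · rintro ⟨⟨s, hs⟩, rfl⟩
      exact ⟨h s, ⟨s, hs, rfl⟩, hhx s⟩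
  have emb : IsEmbedding (fun s : ↥S => ((e.symm (s : ℚ) : ↥(x '' A)) : X)) :=
    IsEmbedding.subtypeVal.comp (e.symm.isEmbedding.comp IsEmbedding.subtypeVal)
  have hBQ : Nonempty (↥(x '' B) ≃ₜ ℚ) :=
    ⟨((Homeomorph.setCongr hBim).trans emb.toHomeomorph.symm).trans eS⟩
  -- the order type of B is ω
  have hBrange : B = Set.range (fun n => h ((g n).1 : ℚ)) := by
    rw [hBdef, hSdef, ← Set.range_comp]
    rfl
  have hBtype : Ordinal.type (Subrel ((· < ·) : Ordinal → Ordinal → Prop) (· ∈ B))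
      = Ordinal.omega0 := by
    have hty : Ordinal.type (ULift.down.{1} ⁻¹'o ((· < ·) : ℕ → ℕ → Prop))
        = Ordinal.type (Subrel ((· < ·) : Ordinal → Ordinal → Prop) (· ∈ B)) := by
      refine Ordinal.type_eq.2 ?_
      refine ⟨RelIso.mk (Equiv.ofBijective (fun n => ⟨h ((g n.down).1 : ℚ), by
        rw [hBrange]; exact Set.mem_range_self n.down⟩) ⟨?_, ?_⟩) ?_⟩
      · intro a b hab
        exact ULift.ext a b (hφ.injective (congrArg Subtype.val hab))
      · rintro ⟨o, ho⟩
        rw [hBrange] at ho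
        obtain ⟨n, rfl⟩ := ho
        exact ⟨⟨n⟩, rfl⟩
      · intro a b
        exact hφ.lt_iff_lt
    rw [← hty, Ordinal.type_uLift, Ordinal.type_nat_lt, Ordinal.lift_omega0]
  have hωmem : Ordinal.omega0 ∈ {o : Ordinal | ∃ A ∈ P, Nonempty (↥(x '' A) ≃ₜ ℚ) ∧
      Ordinal.type (Subrel ((· < ·) : Ordinal → Ordinal → Prop) (· ∈ A)) = o} :=
    ⟨B, hBP, hBQ, hBtype⟩
  -- lower bound: every member of the set is ≥ ω
  have hlow : ∀ o ∈ {o : Ordinal | ∃ A ∈ P, Nonempty (↥(x '' A) ≃ₜ ℚ) ∧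
      Ordinal.type (Subrel ((· < ·) : Ordinal → Ordinal → Prop) (· ∈ A)) = o},
      Ordinal.omega0 ≤ o := by
    rintro o ⟨A', _, ⟨e'⟩, rfl⟩
    rw [← Ordinal.aleph0_le_card, Ordinal.card_type]
    rw [← Cardinal.infinite_iff]
    have h1 : Infinite ↥(x '' A') := e'.toEquiv.infinite_iff.2 inferInstance
    have h2 : (x '' A').Infinite := Set.infinite_coe_iff.1 h1
    exact (Set.Infinite.of_image x h2).to_subtype
  exact le_antisymm (csInf_le' hωmem) (le_csInf ⟨_, hωmem⟩ hlow)
end
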